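/- arXiv:1901.10722 — 7 statements merged into one kernel-verified Lean document; each statement's English description precedes it below -/
import Mathlib

section
/- Let T be a string and i a position, and let s₁ < s₂ < ... < s_g be the lengths of all maximal palindromes of T ending at position i, with differences d_j = s_j − s_{j−1} for j ≥ 2 and d₁ = 0. Then the sequence of differences is non-decreasing: d_{j+1} ≥ d_j for all 1 ≤ j < g. -/
/-- `MaxPalEnd T i s` : the substring of `T` of length `s ≥ 1` ending at
(1-indexed) position `i` is a palindrome that cannot be extended outward. -/
def MaxPalEnd {α : Type*} (T : List α) (i s : ℕ) : Prop :=
  1 ≤ s ∧ s ≤ i ∧ i ≤ T.length ∧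
  (((T.take i).drop (i - s)).reverse = (T.take i).drop (i - s)) ∧
  ¬(s < i ∧ i < T.length ∧ T[i - s - 1]? = T[i]?)

/-- The palindrome condition in terms of pointwise `getElem?`. -/
lemma pal_iff_pointwise {α : Type*} (T : List α) (i s : ℕ) (hsi : s ≤ i) (hiT : i ≤ T.length) :
    (((T.take i).drop (i - s)).reverse = (T.take i).drop (i - s)) ↔
      ∀ j, j < s → T[i - s + j]? = T[i - 1 - j]? := by
  set w := (T.take i).drop (i - s) with hw
  have hlen : w.length = s := by
    simp only [hw, List.length_drop, List.length_take]
    omega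
  have hwg : ∀ j, j < s → w[j]? = T[i - s + j]? := by
    intro j hj
    rw [hw, List.getElem?_drop, List.getElem?_take]
    rw [if_pos (by omega)]
  constructor
  · intro hpal j hj
    have h1 : w.reverse[j]? = w[w.length - 1 - j]? :=
      List.getElem?_reverse (by omega)
    rw [hpal] at h1
    rw [← hwg j hj, h1, hlen, hwg (s - 1 - j) (by omega)]
    congr 1
    omega
  · intro h
    apply List.ext_getElem?
    intro n
    by_cases hn : n < s
    · have h1 : w.reverse[n]? = w[w.length - 1 - n]? :=
        List.getElem?_reverse (by omega)
      rw [h1, hlen, hwg (s - 1 - n) (by omega), hwg n hn]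
      have := h n hn
      rw [this]
      congr 1
      omega
    · have h1 : w.reverse[n]? = none := by
        rw [List.getElem?_eq_none]
        simp [hlen]; omega
      have h2 : w[n]? = none := by
        rw [List.getElem?_eq_none]
        omega
      rw [h1, h2]

/-- Core combinatorial argument, phrased for an arbitrary function `f`. -/
lemma core {β : Type*} (f : ℕ → β) (i b c : ℕ)
    (hbc : b < c) (hci : c ≤ i) (hc2b : c < 2 * b)
    (Qb : ∀ j, j < b → f (i - b + j) = f (i - 1 - j))
    (Qc : ∀ j, j < c → f (i - c + j) = f (i - 1 - j)) :
    (∀ j, j < 2 * b - c → f (i - (2 * b - c) + j) = f (i - 1 - j)) ∧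
      f (i - b - 1) = f (i - (2 * b - c) - 1) := by
  set p := c - b with hp
  set m := 2 * b - c with hm
  -- the suffix of length c has period p
  have hper : ∀ j, j < b → f (i - c + j) = f (i - b + j) := by
    intro j hj
    rw [Qc j (by omega), Qb j hj]
  constructor
  · intro j hj
    have e1 : i - m + j = i - b + (j + p) := by omega
    have e2 : i - c + (j + p) = i - b + j := by omega
    calc f (i - m + j) = f (i - b + (j + p)) := by rw [e1]
      _ = f (i - c + (j + p)) := (hper (j + p) (by omega)).symm
      _ = f (i - b + j) := by rw [e2]
      _ = f (i - c + j) := (hper j (by omega)).symm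
      _ = f (i - 1 - j) := Qc j (by omega)
  · have e1 : i - c + (p - 1) = i - b - 1 := by omega
    have e2 : i - b + (p - 1) = i - m - 1 := by omega
    have := hper (p - 1) (by omega)
    rw [e1, e2] at this
    exact this

/-- If `s 0 < s 1 < ... < s (g-1)` are the lengths of all maximal palindromes of `T`
ending at position `i`, then the consecutive differences are non-decreasing:
`s (j+2) - s (j+1) ≥ s (j+1) - s j`. -/
theorem maxpal_differences_monotone {α : Type*} (T : List α) (i g : ℕ) (s : ℕ → ℕ)
    (hmono : ∀ j, j + 1 < g → s j < s (j + 1))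
    (hset : ∀ x, MaxPalEnd T i x ↔ ∃ j < g, s j = x) :
    ∀ j, j + 2 < g → 2 * s (j + 1) ≤ s (j + 2) + s j := by
  have hmono' : ∀ k l, k < l → l < g → s k < s l := by
    intro k l hkl hlg
    induction l with
    | zero => omega
    | succ n ih =>
      rcases Nat.lt_or_ge k n with h | h
      · exact lt_trans (ih h (by omega)) (hmono n (by omega))
      · have : k = n := by omega
        subst this
        exact hmono k (by omega)
  intro j hj
  by_contra hlt
  push_neg at hlt
  set a := s j with ha
  set b := s (j + 1) with hb
  set c := s (j + 2) with hc
  have hab : a < b := hmono j (by omega)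
  have hbc : b < c := hmono (j + 1) (by omega)
  have hA : MaxPalEnd T i a := (hset a).2 ⟨j, by omega, rfl⟩
  have hB : MaxPalEnd T i b := (hset b).2 ⟨j + 1, by omega, rfl⟩
  have hC : MaxPalEnd T i c := (hset c).2 ⟨j + 2, by omega, rfl⟩
  obtain ⟨ha1, hai, hiT, hpalA, hmaxA⟩ := hA
  obtain ⟨hb1, hbi, -, hpalB, hmaxB⟩ := hB
  obtain ⟨hc1, hci, -, hpalC, hmaxC⟩ := hC
  set m := 2 * b - c with hm
  have ham : a < m := by omega
  have hmb : m < b := by omega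
  -- pointwise palindrome conditions
  have Qb := (pal_iff_pointwise T i b hbi hiT).1 hpalB
  have Qc := (pal_iff_pointwise T i c hci hiT).1 hpalC
  obtain ⟨Qm, hchar⟩ := core (fun k => T[k]?) i b c hbc hci (by omega) Qb Qc
  -- m is a palindromic suffix
  have hpalM : ((T.take i).drop (i - m)).reverse = (T.take i).drop (i - m) :=
    (pal_iff_pointwise T i m (by omega) hiT).2 Qm
  -- m is not in the enumeration, hence not maximal
  have hnotM : ¬ MaxPalEnd T i m := by
    rw [hset]
    rintro ⟨k, hkg, hk⟩
    rcases Nat.lt_or_ge k (j + 1) with h | h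
    · rcases Nat.lt_or_ge k j with h' | h'
      · have := hmono' k j h' (by omega)
        omega
      · have : k = j := by omega
        subst this; omega
    · rcases Nat.lt_or_ge (j + 1) k with h' | h'
      · have := hmono' (j + 1) k h' hkg
        omega
      · have : k = j + 1 := by omega
        subst this; omega
  have hext : m < i ∧ i < T.length ∧ T[i - m - 1]? = T[i]? := by
    by_contra hh
    exact hnotM ⟨by omega, by omega, hiT, hpalM, hh⟩
  obtain ⟨-, hiTlt, heqm⟩ := hext
  -- b is maximal, so its preceding character differs; but periodicity says it equals
  apply hmaxB
  refine ⟨by omega, hiTlt, ?_⟩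
  have : T[i - b - 1]? = T[i - m - 1]? := hchar
  rw [this, heqm]
end

section
/- Let s₁ < ... < s_g be the lengths of all maximal palindromes of T ending at position i, with d_j = s_j − s_{j−1}. For any 1 < j < g, if d_{j+1} ≠ d_j then d_{j+1} ≥ d_j + d_{j−1}. -/
/-- Pointwise palindromicity of the length-`s` suffix of the length-`i` prefix,
in terms of `Q k = T.get? (i - 1 - k)`, the `k`-th character from the right. -/
def PalQ {α : Type*} (T : List α) (i s : ℕ) : Prop :=
  ∀ k, k < s → T[i - 1 - k]? = T[i - 1 - (s - 1 - k)]?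

lemma palQ_iff {α : Type*} (T : List α) (i s : ℕ) (hs : s ≤ i) (hi : i ≤ T.length) :
    (((T.take i).drop (i - s)).reverse = (T.take i).drop (i - s)) ↔ PalQ T i s := by
  set l := (T.take i).drop (i - s) with hl
  have hlen : l.length = s := by
    simp [hl, List.length_drop, List.length_take]; omega
  have hget : ∀ k, k < s → l[k]? = T[i - 1 - (s - 1 - k)]? := by
    intro k hk
    have h1 : l[k]? = (T.take i)[i - s + k]? := by
      rw [hl, List.getElem?_drop]
    have h2 : (T.take i)[i - s + k]? = T[i - s + k]? := by
      apply List.getElem?_take_of_lt; omega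
    rw [h1, h2]
    congr 1
    omega
  constructor
  · intro h k hk
    have h1 : l.reverse[k]? = l[l.length - 1 - k]? :=
      List.getElem?_reverse (by omega)
    rw [h] at h1
    rw [hget k hk] at h1
    rw [hlen] at h1
    rw [hget (s - 1 - k) (by omega)] at h1
    have : s - 1 - (s - 1 - k) = k := by omega
    rw [this] at h1
    exact h1.symm
  · intro h
    apply List.ext_getElem?
    intro n
    by_cases hn : n < s
    · have h1 : l.reverse[n]? = l[l.length - 1 - n]? :=
        List.getElem?_reverse (by omega)
      rw [h1, hlen, hget (s - 1 - n) (by omega), hget n hn]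
      have : s - 1 - (s - 1 - n) = n := by omega
      rw [this]
      exact h n hn
    · have h1 : l.reverse[n]? = none := by
        apply List.getElem?_eq_none; simp [hlen]; omega
      have h2 : l[n]? = none := by
        apply List.getElem?_eq_none; omega
      rw [h1, h2]

/-- Period lemma: two palindromic suffixes of lengths `a ≤ b` give period `b - a`. -/
lemma palQ_period {α : Type*} (T : List α) (i a b : ℕ) (ha : PalQ T i a) (hb : PalQ T i b)
    (hab : a ≤ b) : ∀ k, k < a → T[i - 1 - k]? = T[i - 1 - (k + (b - a))]? := by
  intro k hk
  have h1 := hb (a - 1 - k) (by omega)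
  have h2 := ha k hk
  rw [h2, h1]
  congr 1
  omega

/-- Shrink lemma: palindromic suffixes of lengths `b ≤ c` give one of length `2b - c`. -/
lemma palQ_shrink {α : Type*} (T : List α) (i b c : ℕ) (hb : PalQ T i b) (hc : PalQ T i c)
    (hbc : b ≤ c) : PalQ T i (2 * b - c) := by
  intro k hk
  have hper := palQ_period T i b c hb hc hbc
  have h1 := hper (2 * b - c - 1 - k) (by omega)
  have h2 := hb k (by omega)
  rw [h2]
  rw [h1]
  congr 1
  omega

/-- With `s 0 < s 1 < ...` the sorted lengths of all maximal palindromes of `T`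
ending at position `i`, `d 0 = 0` and `d j = s j - s (j-1)` for `1 ≤ j < g`:
if `d (j+1) ≠ d j` then `d (j+1) ≥ d j + d (j-1)`. -/
theorem maxpal_differences_fibonacci {α : Type*} (T : List α) (i g : ℕ) (s d : ℕ → ℕ)
    (hmono : ∀ j, j + 1 < g → s j < s (j + 1))
    (hset : ∀ x, MaxPalEnd T i x ↔ ∃ j < g, s j = x)
    (hd0 : d 0 = 0)
    (hd : ∀ j, 1 ≤ j → j < g → d j = s j - s (j - 1)) :
    ∀ j, 1 ≤ j → j + 1 < g → d (j + 1) ≠ d j → d j + d (j - 1) ≤ d (j + 1) := by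
  -- strict monotonicity in general
  have hsm : ∀ k m, m + k + 1 < g → s m < s (m + k + 1) := by
    intro k
    induction k with
    | zero => intro m h; exact hmono m h
    | succ k ih =>
      intro m h
      have h1 := ih m (by omega)
      have h2 := hmono (m + k + 1) (by omega)
      have : m + (k + 1) + 1 = (m + k + 1) + 1 := by omega
      rw [this]; omega
  have hlt : ∀ m n, m < n → n < g → s m < s n := by
    intro m n h hn
    have := hsm (n - m - 1) m (by omega)
    rwa [show m + (n - m - 1) + 1 = n by omega] at this
  intro j hj1 hjg hne
  by_contra hcon
  push_neg at hcon
  -- names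
  set a := s (j - 1) with ha'
  set b := s j with hb'
  set c := s (j + 1) with hc'
  have hab : a < b := hlt (j - 1) j (by omega) (by omega)
  have hbc : b < c := hmono j hjg
  have hMa : MaxPalEnd T i a := (hset a).mpr ⟨j - 1, by omega, rfl⟩
  have hMb : MaxPalEnd T i b := (hset b).mpr ⟨j, by omega, rfl⟩
  have hMc : MaxPalEnd T i c := (hset c).mpr ⟨j + 1, hjg, rfl⟩
  obtain ⟨ha1, hai, hiT, hpla, -⟩ := hMa
  obtain ⟨hb1, hbi, -, hplb, hmaxb⟩ := hMb
  obtain ⟨hc1, hci, -, hplc, -⟩ := hMc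
  have hQb : PalQ T i b := (palQ_iff T i b hbi hiT).mp hplb
  have hQc : PalQ T i c := (palQ_iff T i c hci hiT).mp hplc
  -- difference values
  have hdj : d j = b - a := by rw [hd j hj1 (by omega)]
  have hdj1 : d (j + 1) = c - b := by
    rw [hd (j + 1) (by omega) hjg]; congr 1
  set p := b - a with hp'
  set q := c - b with hq'
  have hqp : q ≠ p := by rw [hdj, hdj1] at hne; exact hne
  -- the in-between palindromic suffix length
  set t := b - q with ht'
  have htb : t < b := by omega
  -- find consecutive indices m, m+1 with s m < t < s (m+1)
  have hmain : ∃ m, m + 1 < g ∧ s m < t ∧ t < s (m + 1) ∧ 1 ≤ s m := by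
    rcases lt_or_gt_of_ne hqp with hlt1 | hgt1
    · -- q < p : a < t < b
      refine ⟨j - 1, by omega, by omega, ?_, ha1⟩
      rw [show j - 1 + 1 = j by omega]; omega
    · -- q > p : forces j ≥ 2, and s (j-2) < t < a
      have hr : d (j - 1) ≥ 1 := by
        rw [hdj, hdj1] at hcon; omega
      have hj2 : 2 ≤ j := by
        by_contra h
        have : j = 1 := by omega
        rw [this] at hr; simp [hd0] at hr
      have hdjm : d (j - 1) = a - s (j - 2) := by
        have h := hd (j - 1) (by omega) (by omega)
        rwa [show j - 1 - 1 = j - 2 by omega] at h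
      have ha2 : s (j - 2) < a := hlt (j - 2) (j - 1) (by omega) (by omega)
      have hM2 : MaxPalEnd T i (s (j - 2)) := (hset _).mpr ⟨j - 2, by omega, rfl⟩
      refine ⟨j - 2, by omega, ?_, ?_, hM2.1⟩
      · -- s (j-2) < t,  since q < p + r
        rw [hdj, hdj1, hdjm] at hcon
        omega
      · rw [show j - 2 + 1 = j - 1 by omega]
        omega
  obtain ⟨m, hmg, hmt, htm, hm1⟩ := hmain
  -- t is not a maximal palindrome length
  have hnotM : ¬ MaxPalEnd T i t := by
    intro hM
    obtain ⟨k, hk, hks⟩ := (hset t).mp hM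
    rcases lt_trichotomy k m with h | h | h
    · have := hlt k m h (by omega); omega
    · rw [h] at hks; omega
    · rcases Nat.lt_or_ge k (m + 1) with h2 | h2
      · omega
      · rcases Nat.eq_or_lt_of_le h2 with h3 | h3
        · rw [← h3] at hks; omega
        · have := hlt (m + 1) k h3 hk; omega
  -- but t is a palindromic suffix
  have hQt : PalQ T i t := by
    have := palQ_shrink T i b c hQb hQc (by omega)
    rwa [show 2 * b - c = t by omega] at this
  have hplt : ((T.take i).drop (i - t)).reverse = (T.take i).drop (i - t) :=
    (palQ_iff T i t (by omega) hiT).mpr hQt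
  -- so t must be extendable
  have hext : t < i ∧ i < T.length ∧ T[i - t - 1]? = T[i]? := by
    by_contra hE
    exact hnotM ⟨by omega, by omega, hiT, hplt, hE⟩
  obtain ⟨-, hiT', hchar⟩ := hext
  -- transfer the character: Q t = Q b
  have hQ : T[i - 1 - t]? = T[i - 1 - (t + (c - b))]? :=
    palQ_period T i b c hQb hQc (by omega) t htb
  have hQ2 : T[i - b - 1]? = T[i]? := by
    have e1 : i - 1 - t = i - t - 1 := by omega
    have e2 : i - 1 - (t + (c - b)) = i - b - 1 := by omega
    rw [e1, e2] at hQ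
    rw [← hQ]
    exact hchar
  exact hmaxb ⟨by omega, hiT', hQ2⟩
end

section
/- The sorted sequence of lengths of maximal palindromes of T ending at a position i can be partitioned into O(log i) arithmetic progressions. -/
namespace MPAux
variable {β : Type*}

def Per (g : ℕ → β) (p n : ℕ) : Prop := ∀ j, j + p < n → g j = g (j + p)
def Pal (g : ℕ → β) (s : ℕ) : Prop := ∀ j < s, g j = g (s - 1 - j)

lemma per_mono {g : ℕ → β} {p n m : ℕ} (h : Per g p n) (hm : m ≤ n) : Per g p m :=
  fun j hj => h j (lt_of_lt_of_le hj hm)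

lemma per_self (g : ℕ → β) (n : ℕ) : Per g n n := fun j hj => absurd hj (by omega)

lemma per_of_pal_pal {g : ℕ → β} {s t : ℕ} (hs : Pal g s) (ht : Pal g t) (hts : t ≤ s) :
    Per g (s - t) s := by
  intro j hj
  have hjt : j < t := by omega
  have h1 := ht j hjt
  have h2 := hs (j + (s - t)) hj
  rw [h1, h2]
  congr 1
  omega

lemma pal_sub_of_per {g : ℕ → β} {s p : ℕ} (hs : Pal g s) (hp : Per g p s) :
    Pal g (s - p) := by
  intro j hj
  have h1 := hs j (by omega)
  have h2 := hp (s - p - 1 - j) (by omega)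
  rw [h1, h2]
  congr 1
  omega

lemma pal_sub_mul {g : ℕ → β} {v p : ℕ} (hv : Pal g v) (hp : Per g p v) (k : ℕ) :
    Pal g (v - k * p) := by
  induction k with
  | zero => simpa using hv
  | succ k ih =>
      have h2 : Per g p (v - k * p) := per_mono hp (by omega)
      have := pal_sub_of_per ih h2
      have e : v - k * p - p = v - (k+1) * p := by
        have : (k+1)*p = k*p + p := by ring
        omega
      rwa [e] at this


lemma per_sub {g : ℕ → β} {p q n : ℕ} (hP : Per g p n) (hQ : Per g q n) (hpq : p ≤ q) :
    Per g (q - p) (n - p) := by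
  intro j hj
  have hjq : j + q < n := by omega
  have h1 := hQ j hjq
  have h2 := hP (j + (q - p)) (by omega)
  have e : j + (q - p) + p = j + q := by omega
  rw [e] at h2
  rw [h1, ← h2]

lemma per_lift {g : ℕ → β} {p G n : ℕ} (hP : Per g p n) (hG : Per g G (n - p))
    (hG1 : 1 ≤ G) (hn : 2 * p + G ≤ n) : Per g G n := by
  intro j hj
  by_cases h : j + G < n - p
  · exact hG j h
  · have hjp : p ≤ j := by omega
    have e1 := hP (j - p) (by omega)
    have e2 := hP (j - p + G) (by omega)
    have e3 := hG (j - p) (by omega)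
    have r1 : j - p + p = j := by omega
    have r2 : j - p + G + p = j + G := by omega
    rw [r1] at e1
    rw [r2] at e2
    rw [← e1, ← e2, e3]

lemma fw {g : ℕ → β} : ∀ m p q n, p + q ≤ m → 1 ≤ p → p ≤ q → p + q ≤ n →
    Per g p n → Per g q n → Per g (Nat.gcd p q) n := by
  intro m
  induction m with
  | zero => intro p q n h hp; omega
  | succ m ih =>
      intro p q n hm hp hpq hn hP hQ
      rcases Nat.eq_or_lt_of_le hpq with h | h
      · subst h
        rwa [Nat.gcd_self]
      · -- p < q
        set q' := q - p with hq'
        have hq'1 : 1 ≤ q' := by omega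
        have hPn' : Per g p (n - p) := per_mono hP (by omega)
        have hQ' : Per g q' (n - p) := per_sub hP hQ (by omega)
        have hgcd : Nat.gcd p q' = Nat.gcd p q := by
          rw [hq', Nat.gcd_sub_self_right (by omega)]
        have hG : Per g (Nat.gcd p q) (n - p) := by
          rcases le_total p q' with hle | hle
          · have := ih p q' (n - p) (by omega) hp hle (by omega) hPn' hQ'
            rwa [hgcd] at this
          · have := ih q' p (n - p) (by omega) hq'1 hle (by omega) hQ' hPn'
            rwa [Nat.gcd_comm, hgcd] at this
        have hG1 : 1 ≤ Nat.gcd p q := Nat.gcd_pos_of_pos_left _ hp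
        have hGle : Nat.gcd p q ≤ q' := by
          rw [← hgcd]; exact Nat.le_of_dvd hq'1 (Nat.gcd_dvd_right _ _)
        exact per_lift hP hG hG1 (by omega)

lemma chain2 {g : ℕ → β} {v p : ℕ} (hp : Per g p v) (hp1 : 1 ≤ p) :
    ∀ k, 1 ≤ k → k * p < v → g (v - k * p) = g (v - p) := by
  intro k
  induction k with
  | zero => omega
  | succ k ih =>
      intro _ hkv
      by_cases hk : k = 0
      · subst hk; simp
      · have hk1 : 1 ≤ k := by omega
        have hkp : (k+1) * p = k * p + p := by ring
        have h1 : (v - (k+1) * p) + p = v - k * p := by omega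
        have h3 : p ≤ k * p := le_mul_of_one_le_left (Nat.zero_le _) hk1
        have h2 := hp (v - (k+1) * p) (by omega)
        rw [h1] at h2
        rw [h2]
        exact ih hk1 (by omega)

lemma level (g : ℕ → β) (n : ℕ) (Q : Prop) (c : β) (j : ℕ) :
    ∃ aps : List (ℕ × ℕ × ℕ), aps.length ≤ 2 ∧ ∀ x,
      ((1 ≤ x ∧ x ≤ n ∧ Pal g x ∧ ¬(x < n ∧ Q ∧ g x = c)) ∧ 2^j ≤ x ∧ x < 2^(j+1)) ↔
      ∃ ap ∈ aps, ∃ k < ap.2.2, x = ap.1 + k * ap.2.1 := by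
  classical
  set S : ℕ → Prop := fun x => 1 ≤ x ∧ x ≤ n ∧ Pal g x with hS
  set Vf : Finset ℕ := (Finset.Ico (2^j) (2^(j+1))).filter S with hVf
  by_cases hV : Vf.Nonempty
  · set v := Vf.max' hV with hv
    have hvmem : v ∈ Vf := Vf.max'_mem hV
    have hvS : S v ∧ 2^j ≤ v ∧ v < 2^(j+1) := by
      have := hvmem
      rw [hVf, Finset.mem_filter, Finset.mem_Ico] at this
      exact ⟨this.2, this.1.1, this.1.2⟩
    have hv1 : 1 ≤ v := le_trans (Nat.one_le_two_pow) hvS.2.1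
    have hvmax : ∀ x, S x → 2^j ≤ x → x < 2^(j+1) → x ≤ v := by
      intro x hx h1 h2
      exact Vf.le_max' x (by rw [hVf, Finset.mem_filter, Finset.mem_Ico]; exact ⟨⟨h1, h2⟩, hx⟩)
    have hPvset : (setOf (fun p => 1 ≤ p ∧ Per g p v)).Nonempty := ⟨v, hv1, per_self g v⟩
    set p := sInf {p | 1 ≤ p ∧ Per g p v} with hpdef
    have hp : 1 ≤ p ∧ Per g p v := Nat.sInf_mem hPvset
    have hple : ∀ d, 1 ≤ d → Per g d v → p ≤ d := fun d h1 h2 => Nat.sInf_le ⟨h1, h2⟩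
    set K := (v - 2^j) / p with hK
    have hKp : K * p ≤ v - 2^j := by
      rw [hK]; exact Nat.div_mul_le_self _ _
    -- Claim A
    have claimA : ∀ k, 1 ≤ k → k ≤ K →
        (S (v - k*p) ∧ 2^j ≤ v - k*p ∧ v - k*p < 2^(j+1)) ∧
        g (v - k*p) = g (v - p) ∧ v - k*p < v := by
      intro k hk1 hkK
      have hkp : k * p ≤ K * p := Nat.mul_le_mul_right p hkK
      have hpkp : p ≤ k * p := le_mul_of_one_le_left (Nat.zero_le _) hk1
      have hpow : 1 ≤ 2^j := Nat.one_le_two_pow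
      have hlow : 2^j ≤ v - k*p := by omega
      refine ⟨⟨⟨by omega, by omega, pal_sub_mul hvS.1.2.2 hp.2 k⟩, hlow, by omega⟩,
        chain2 hp.2 hp.1 k hk1 (by omega), by omega⟩
    -- Claim B
    have claimB : ∀ x, S x → 2^j ≤ x → x < 2^(j+1) → x < v →
        ∃ k, 1 ≤ k ∧ k ≤ K ∧ x = v - k*p := by
      intro x hx h1 h2 hxv
      set d := v - x with hd
      have hd1 : 1 ≤ d := by omega
      have hPd : Per g d v := per_of_pal_pal hvS.1.2.2 hx.2.2 (le_of_lt hxv)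
      have hpd : p ≤ d := hple d hd1 hPd
      have hdx : d < x := by
        have : v < 2 * 2^j := by
          have : (2:ℕ)^(j+1) = 2 * 2^j := by ring
          omega
        omega
      have hpdv : p + d ≤ v := by omega
      have hgcd : Per g (Nat.gcd p d) v := by
        rcases le_total p d with h | h
        · exact fw (p + d) p d v le_rfl hp.1 h hpdv hp.2 hPd
        · have := fw (d + p) d p v le_rfl hd1 h (by omega) hPd hp.2
          rwa [Nat.gcd_comm] at this
      have hgcd1 : 1 ≤ Nat.gcd p d := Nat.gcd_pos_of_pos_left _ hp.1
      have hpgcd : p = Nat.gcd p d :=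
        le_antisymm (hple _ hgcd1 hgcd) (Nat.le_of_dvd hp.1 (Nat.gcd_dvd_left _ _))
      have hdvd : p ∣ d := hpgcd ▸ Nat.gcd_dvd_right p d
      obtain ⟨k, hk⟩ := hdvd
      have hk1 : 1 ≤ k := by
        rcases Nat.eq_zero_or_pos k with h | h
        · subst h; simp at hk; omega
        · exact h
      have hkK : k ≤ K := by
        rw [hK]
        rw [Nat.le_div_iff_mul_le hp.1]
        have : k * p = d := by rw [hk]; ring
        omega
      exact ⟨k, hk1, hkK, by have : p * k = d := hk.symm; rw [Nat.mul_comm] at this; omega⟩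
    -- the list
    set apTop : List (ℕ × ℕ × ℕ) := if ¬ (v < n ∧ Q ∧ g v = c) then [(v, 0, 1)] else [] with hT
    set apTail : List (ℕ × ℕ × ℕ) :=
      if (1 ≤ K ∧ ¬(Q ∧ g (v - p) = c)) then [(v - K*p, p, K)] else [] with hTl
    refine ⟨apTop ++ apTail, ?_, ?_⟩
    · rw [List.length_append, hT, hTl]
      split <;> split <;> simp
    · intro x
      constructor
      · rintro ⟨⟨hx1, hxn, hxP, hxE⟩, h1, h2⟩
        have hxv : x ≤ v := hvmax x ⟨hx1, hxn, hxP⟩ h1 h2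
        rcases Nat.eq_or_lt_of_le hxv with heq | hlt
        · have hvE : ¬(v < n ∧ Q ∧ g v = c) := by rw [← heq]; exact hxE
          refine ⟨(v, 0, 1), ?_, 0, ?_, ?_⟩
          · rw [List.mem_append, hT]
            left
            rw [if_pos hvE]
            simp
          · show (0:ℕ) < 1; omega
          · show x = v + 0 * 0; omega
        · obtain ⟨k, hk1, hkK, hxeq⟩ := claimB x ⟨hx1, hxn, hxP⟩ h1 h2 hlt
          have hA := claimA k hk1 hkK
          have hnotQ : ¬(Q ∧ g (v - p) = c) := by
            rintro ⟨hQ, hc⟩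
            exact hxE ⟨by omega, hQ, by rw [hxeq, hA.2.1, hc]⟩
          refine ⟨(v - K*p, p, K), ?_, K - k, ?_, ?_⟩
          · rw [List.mem_append, hTl]
            right
            rw [if_pos ⟨le_trans hk1 hkK, hnotQ⟩]
            simp
          · show K - k < K
            omega
          · have hsplit : (K - k) * p + k * p = K * p := by
              rw [← Nat.add_mul, Nat.sub_add_cancel hkK]
            have hpkp : p ≤ k * p := le_mul_of_one_le_left (Nat.zero_le _) hk1
            have hpow : 1 ≤ 2^j := Nat.one_le_two_pow
            show x = v - K*p + (K-k)*p
            omega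
      · rintro ⟨ap, hap, k, hkl, hxeq⟩
        rw [List.mem_append] at hap
        rcases hap with hap | hap
        · rw [hT] at hap
          by_cases hEv : ¬ (v < n ∧ Q ∧ g v = c)
          · rw [if_pos hEv] at hap
            simp at hap
            subst hap
            simp at hkl
            subst hkl
            simp at hxeq
            subst hxeq
            exact ⟨⟨hv1, hvS.1.2.1, hvS.1.2.2, hEv⟩, hvS.2.1, hvS.2.2⟩
          · rw [if_neg hEv] at hap; simp at hap
        · rw [hTl] at hap
          by_cases hc : (1 ≤ K ∧ ¬(Q ∧ g (v - p) = c))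
          · rw [if_pos hc] at hap
            simp at hap
            subst hap
            have hxeq' : x = (v - K*p) + k * p := hxeq
            have hkl' : k < K := hkl
            set k' := K - k with hk'
            have hk'1 : 1 ≤ k' := by omega
            have hk'K : k' ≤ K := by omega
            have hA := claimA k' hk'1 hk'K
            have hxval : x = v - k' * p := by
              have hsplit : k * p + k' * p = K * p := by
                rw [hk', ← Nat.add_mul, Nat.add_sub_cancel' (le_of_lt hkl)]
              have hKpv : K * p ≤ v - 2^j := hKp
              have hpow : 1 ≤ 2^j := Nat.one_le_two_pow
              omega
            rw [← hxval] at hA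
            refine ⟨⟨hA.1.1.1, hA.1.1.2.1, hA.1.1.2.2, ?_⟩, hA.1.2.1, hA.1.2.2⟩
            rintro ⟨hxn, hQ, hgc⟩
            exact hc.2 ⟨hQ, by rw [← hA.2.1, hgc]⟩
          · rw [if_neg hc] at hap; simp at hap
  · refine ⟨[], by simp, fun x => ⟨?_, by simp⟩⟩
    rintro ⟨⟨hx1, hxn, hxP, _⟩, h1, h2⟩
    exact (hV ⟨x, by rw [hVf, Finset.mem_filter, Finset.mem_Ico]; exact ⟨⟨h1, h2⟩, hx1, hxn, hxP⟩⟩).elim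

lemma bind_len_le {f : ℕ → List (ℕ × ℕ × ℕ)} (h : ∀ j, (f j).length ≤ 2) :
    ∀ l : List ℕ, (l.flatMap f).length ≤ 2 * l.length := by
  intro l
  induction l with
  | nil => simp
  | cons a l ih =>
      rw [List.flatMap_cons, List.length_append, List.length_cons]
      have := h a
      omega

lemma main (g : ℕ → β) (n : ℕ) (Q : Prop) (c : β) :
    ∃ aps : List (ℕ × ℕ × ℕ), aps.length ≤ 2 * (Nat.log 2 n + 1) ∧ ∀ x,
      (1 ≤ x ∧ x ≤ n ∧ Pal g x ∧ ¬(x < n ∧ Q ∧ g x = c)) ↔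
      ∃ ap ∈ aps, ∃ k < ap.2.2, x = ap.1 + k * ap.2.1 := by
  classical
  set F : ℕ → List (ℕ × ℕ × ℕ) := fun j => (level g n Q c j).choose with hF
  have hFspec : ∀ j, (F j).length ≤ 2 ∧ ∀ x,
      ((1 ≤ x ∧ x ≤ n ∧ Pal g x ∧ ¬(x < n ∧ Q ∧ g x = c)) ∧ 2^j ≤ x ∧ x < 2^(j+1)) ↔
      ∃ ap ∈ F j, ∃ k < ap.2.2, x = ap.1 + k * ap.2.1 :=
    fun j => (level g n Q c j).choose_spec
  refine ⟨(List.range (Nat.log 2 n + 1)).flatMap F, ?_, ?_⟩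
  · have := bind_len_le (fun j => (hFspec j).1) (List.range (Nat.log 2 n + 1))
    rwa [List.length_range] at this
  · intro x
    constructor
    · rintro hM
      set j := Nat.log 2 x with hj
      have hx1 : 1 ≤ x := hM.1
      have h1 : 2^j ≤ x := Nat.pow_log_le_self 2 (by omega)
      have h2 : x < 2^(j+1) := Nat.lt_pow_succ_log_self (by norm_num) x
      have hjle : j ≤ Nat.log 2 n := Nat.log_mono_right hM.2.1
      obtain ⟨ap, hap, hk⟩ := ((hFspec j).2 x).mp ⟨hM, h1, h2⟩
      exact ⟨ap, List.mem_flatMap.mpr ⟨j, List.mem_range.mpr (by omega), hap⟩, hk⟩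
    · rintro ⟨ap, hap, hk⟩
      obtain ⟨j, _, hapj⟩ := List.mem_flatMap.mp hap
      exact (((hFspec j).2 x).mpr ⟨ap, hapj, hk⟩).1

lemma pal_iff_list {α : Type} (T : List α) (i x : ℕ) (hx : x ≤ i) (hi : i ≤ T.length) :
    (((T.take i).drop (i - x)).reverse = (T.take i).drop (i - x)) ↔
      Pal (fun j => T[i - 1 - j]?) x := by
  set L := (T.take i).drop (i - x) with hL
  have hlen : L.length = x := by
    rw [hL, List.length_drop, List.length_take]
    omega
  have hget : ∀ m, m < x → L[m]? = T[i - x + m]? := by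
    intro m hm
    rw [hL, List.getElem?_drop, List.getElem?_take_of_lt (by omega)]
  constructor
  · intro hrev j hj
    show T[i - 1 - j]? = T[i - 1 - (x - 1 - j)]?
    have i1 : i - 1 - j = i - x + (x - 1 - j) := by omega
    have i2 : i - 1 - (x - 1 - j) = i - x + j := by omega
    rw [i1, i2, ← hget _ (by omega), ← hget j hj]
    have hr := List.getElem?_reverse (l := L) (i := j) (by rw [hlen]; omega)
    rw [hrev, hlen] at hr
    exact hr.symm
  · intro hPal
    apply List.ext_getElem?
    intro m
    by_cases hm : m < x
    · have hp : T[i - 1 - m]? = T[i - 1 - (x - 1 - m)]? := hPal m hm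
      have hr := List.getElem?_reverse (l := L) (i := m) (by rw [hlen]; omega)
      rw [hlen] at hr
      rw [hr, hget _ (by omega), hget m hm]
      have i1 : i - x + (x - 1 - m) = i - 1 - m := by omega
      have i2 : i - x + m = i - 1 - (x - 1 - m) := by omega
      rw [i1, i2]
      exact hp
    · have h1 : L[m]? = none := List.getElem?_eq_none_iff.mpr (by omega)
      have h2 : L.reverse[m]? = none := List.getElem?_eq_none_iff.mpr (by rw [List.length_reverse]; omega)
      rw [h1, h2]


end MPAux

/-- The set of lengths of maximal palindromes of `T` ending at position `i` can be
represented by `O(log i)` arithmetic progressions `⟨s, d, t⟩`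
(representing `s, s + d, ..., s + (t-1)d`). -/
theorem maxpal_log_arithmetic_progressions :
    ∃ C : ℕ, ∀ (α : Type) (T : List α) (i : ℕ),
      ∃ aps : List (ℕ × ℕ × ℕ),
        aps.length ≤ C * (Nat.log 2 i + 1) ∧
        ∀ x, MaxPalEnd T i x ↔
          ∃ ap ∈ aps, ∃ k < ap.2.2, x = ap.1 + k * ap.2.1 := by
  refine ⟨2, ?_⟩
  intro α T i
  by_cases hi : i ≤ T.length
  · obtain ⟨aps, hlen, hmem⟩ :=
      MPAux.main (fun j => T[i - 1 - j]?) i (i < T.length) (T[i]?)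
    refine ⟨aps, hlen, fun x => ?_⟩
    rw [← hmem x]
    unfold MaxPalEnd
    constructor
    · rintro ⟨h1, h2, _, h4, h5⟩
      refine ⟨h1, h2, (MPAux.pal_iff_list T i x h2 hi).mp h4, ?_⟩
      rintro ⟨ha, hb, hc⟩
      refine h5 ⟨ha, hb, ?_⟩
      have e : i - x - 1 = i - 1 - x := by omega
      rw [e]
      exact hc
    · rintro ⟨h1, h2, h4, h5⟩
      refine ⟨h1, h2, hi, (MPAux.pal_iff_list T i x h2 hi).mpr h4, ?_⟩
      rintro ⟨ha, hb, hc⟩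
      refine h5 ⟨ha, hb, ?_⟩
      show T[i - 1 - x]? = T[i]?
      have e : i - 1 - x = i - x - 1 := by omega
      rw [e]
      exact hc
  · exact ⟨[], by simp, fun x => ⟨fun h => absurd h.2.2.1 hi, by simp⟩⟩
end

section
/- Let s, s+d, ..., s+(t−1)d with t ≥ 2 be lengths of maximal palindromes of T all ending at position i, forming an arithmetic progression with common difference d. Then d is a period of every one of these maximal palindromes; i.e., for each length s+kd (0 ≤ k ≤ t−1), the substring T[i−(s+kd)+1..i] has period d. -/
/-- `p` is a period of `S`: `S[m] = S[m+p]` whenever both are defined. -/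
def HasPeriod {α : Type*} (S : List α) (p : ℕ) : Prop :=
  ∀ m, m + p < S.length → S[m]? = S[m + p]?

lemma pal_get {α : Type*} (S : List α) (h : S.reverse = S) (m : ℕ) (hm : m < S.length) :
    S[m]? = S[S.length - 1 - m]? := by
  conv_lhs => rw [← h]
  simp only [List.getElem?_reverse hm, List.length_reverse]

lemma key {α : Type*} (S : List α) (d : ℕ) (hd : 1 ≤ d) (hdlen : d < S.length)
    (hS : S.reverse = S) (hP : (S.drop d).reverse = S.drop d) : HasPeriod S d := by
  intro m hm
  have h1 : S[m]? = S[S.length - 1 - m]? := pal_get S hS m (by omega)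
  have h2 : (S.drop d)[S.length - 1 - m - d]? = S[S.length - 1 - m]? := by
    rw [List.getElem?_drop]
    congr 1
    omega
  have hlen : (S.drop d).length = S.length - d := by simp
  have h3 : (S.drop d)[S.length - 1 - m - d]? =
      (S.drop d)[(S.drop d).length - 1 - (S.length - 1 - m - d)]? :=
    pal_get _ hP _ (by rw [hlen]; omega)
  have h4 : (S.drop d).length - 1 - (S.length - 1 - m - d) = m := by rw [hlen]; omega
  have h5 : (S.drop d)[m]? = S[m + d]? := by
    rw [List.getElem?_drop]; congr 1; omega
  rw [h1, ← h2, h3, h4, h5]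

lemma period_drop {α : Type*} (S : List α) (d n : ℕ) (h : HasPeriod S d) :
    HasPeriod (S.drop n) d := by
  intro m hm
  have hlen : (S.drop n).length = S.length - n := by simp
  calc (S.drop n)[m]? = S[n + m]? := by rw [List.getElem?_drop]
    _ = S[n + m + d]? := h (n + m) (by omega)
    _ = (S.drop n)[m + d]? := by rw [List.getElem?_drop]; congr 1; omega

lemma step {α : Type*} (W : List α) (i d A : ℕ) (hW : W.length = i) (hd : 1 ≤ d)
    (hA : 1 ≤ A) (hle : A + d ≤ i)
    (hpal' : (W.drop (i - (A + d))).reverse = W.drop (i - (A + d)))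
    (hpal : (W.drop (i - A)).reverse = W.drop (i - A)) :
    HasPeriod (W.drop (i - (A + d))) d := by
  have hlen : (W.drop (i - (A + d))).length = A + d := by
    simp [List.length_drop, hW]; omega
  apply key _ d hd (by rw [hlen]; omega) hpal'
  have : (W.drop (i - (A + d))).drop d = W.drop (i - A) := by
    rw [List.drop_drop]; congr 1; omega
  rw [this]; exact hpal

/-- If the lengths `s, s+d, ..., s+(t-1)d` (with `t ≥ 2`) all are maximal palindromes
of `T` ending at position `i`, then `d` is a period of every one of these palindromes. -/
theorem maxpal_group_period {α : Type*} (T : List α) (i s d t : ℕ)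
    (ht : 2 ≤ t) (hd : 1 ≤ d)
    (hap : ∀ k < t, MaxPalEnd T i (s + k * d)) :
    ∀ k < t, HasPeriod ((T.take i).drop (i - (s + k * d))) d := by
  intro k hk
  have hW : (T.take i).length = i := by
    have := (hap 0 (by omega)).2.2.1
    simp [List.length_take]; omega
  rcases Nat.lt_or_ge (k + 1) t with hk1 | hk1
  · obtain ⟨-, hle', -, hpal', -⟩ := hap (k + 1) hk1
    obtain ⟨hs1, hle, -, hpal, -⟩ := hap k hk
    have e1 : s + (k + 1) * d = s + k * d + d := by ring
    rw [e1] at hle' hpal'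
    have hstep := step (T.take i) i d (s + k * d) hW hd hs1 hle' hpal' hpal
    have e2 : (T.take i).drop (i - (s + k * d)) =
        ((T.take i).drop (i - (s + k * d + d))).drop d := by
      rw [List.drop_drop]; congr 1; omega
    rw [e2]
    exact period_drop _ d d hstep
  · obtain ⟨j, rfl⟩ : ∃ j, k = j + 1 := ⟨k - 1, by omega⟩
    obtain ⟨hs1, hlep, -, hpalp, -⟩ := hap j (by omega)
    obtain ⟨-, hle, -, hpal, -⟩ := hap (j + 1) hk
    have e1 : s + (j + 1) * d = s + j * d + d := by ring
    rw [e1] at hle hpal ⊢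
    exact step (T.take i) i d (s + j * d) hW hd hs1 (by omega) hpal hpalp
end

section
/- Suppose two palindromic suffixes of a string Y of lengths s₁ < s₂ both end at the last position of Y, with s₂ − s₁ = d, and suppose the set of palindromic suffix lengths {s₁, s₁+d, ..., s₁+(t−1)d} = {s+( j−1)d : 1 ≤ j ≤ t} all occur as maximal palindromes ending at that position. Then there exist palindromes u and v with |uv| = d and a non-negative integer p such that the longest of these palindromes equals (uv)^{t+p−1}u and the shortest equals (uv)^p u. -/
/-- For a palindrome, the suffix of length `m` is the reverse of the prefix of length `m`. -/
lemma pal_drop {α : Type*} {W : List α} (hW : W.reverse = W) (m : ℕ) :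
    W.drop (W.length - m) = (W.take m).reverse := by
  rw [List.reverse_take, hW]

/-- Decomposition of a list with period `d`. -/
lemma periodic_decomp {α : Type*} (d : ℕ) :
    ∀ (k r : ℕ) (W : List α), r < d → W.length = k * d + r →
      W.drop d = W.take (W.length - d) →
      W = (List.replicate k (W.take d)).flatten ++ W.take r := by
  intro k
  induction k with
  | zero =>
    intro r W hr hlen _
    simp only [List.replicate_zero, List.flatten_nil, List.nil_append]
    rw [show r = W.length by omega, List.take_length]
  | succ k ih =>
    intro r W hr hlen hper
    have hmul : (k + 1) * d = k * d + d := by ring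
    have hdW : d ≤ W.length := by omega
    have hlen' : (W.drop d).length = k * d + r := by
      rw [List.length_drop]; omega
    have hper' : (W.drop d).drop d = (W.drop d).take ((W.drop d).length - d) := by
      have h1 : (W.drop d).drop d = W.take (W.length - d - d) := by
        conv_lhs => rw [hper]
        rw [List.drop_take, hper, List.take_take]
        congr 1
        omega
      rw [h1, hper, List.take_take]
      congr 1
      simp only [List.length_take]
      omega
    have hih := ih r (W.drop d) hr hlen' hper'
    have hur : (W.drop d).take r = W.take r := by
      rw [hper, List.take_take]
      congr 1
      omega
    have hrep : List.replicate k ((W.drop d).take d) = List.replicate k (W.take d) := by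
      cases k with
      | zero => rfl
      | succ k' =>
        congr 1
        rw [hper, List.take_take]
        congr 1
        have : (k' + 1 + 1) * d = k' * d + d + d := by ring
        have : (k' + 1) * d = k' * d + d := by ring
        omega
    rw [List.replicate_succ, List.flatten_cons, List.append_assoc]
    conv_lhs => rw [← List.take_append_drop d W]
    congr 1
    rw [← hrep, ← hur, ← hih]

lemma mul_pred {k : ℕ} (d : ℕ) (h : 1 ≤ k) : k * d = (k - 1) * d + d := by
  obtain ⟨m, rfl⟩ : ∃ m, k = m + 1 := ⟨k - 1, by omega⟩
  simp [Nat.add_mul]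

/-- Dropping `j*d` from `(replicate (j+k) B).flatten ++ u` when `|B| = d`. -/
lemma drop_flatten_rep {α : Type*} (B u : List α) (d : ℕ) (hB : B.length = d) :
    ∀ (j k : ℕ), ((List.replicate (j + k) B).flatten ++ u).drop (j * d)
      = (List.replicate k B).flatten ++ u := by
  intro j
  induction j with
  | zero => intro k; simp
  | succ j ih =>
    intro k
    rw [show j + 1 + k = (j + k) + 1 from by omega, List.replicate_succ,
      List.flatten_cons, List.append_assoc,
      show (j + 1) * d = d + j * d from by ring, ← List.drop_drop,
      show List.drop d (B ++ ((List.replicate (j + k) B).flatten ++ u))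
        = (List.replicate (j + k) B).flatten ++ u from by
          rw [← hB]; exact List.drop_left]
    exact ih k

/-- If the lengths `s + (j-1)d`, `1 ≤ j ≤ t` (with `t ≥ 2`, `d ≥ 1`) form a group of
maximal palindromes (palindromic suffixes) of `Y` ending at its last position, then
there exist palindromes `u, v` with `|uv| = d` and `p ≥ 0` such that the longest of
them is `(uv)^{t+p-1} u` and the shortest is `(uv)^p u`. -/
theorem maxpal_group_structure {α : Type*} (Y : List α) (s d t : ℕ)
    (hd : 1 ≤ d) (ht : 2 ≤ t)
    (hall : ∀ j, 1 ≤ j → j ≤ t → MaxPalEnd Y Y.length (s + (j - 1) * d)) :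
    ∃ (u v : List α) (p : ℕ),
      u.reverse = u ∧ v.reverse = v ∧ (u ++ v).length = d ∧
      Y.drop (Y.length - (s + (t - 1) * d)) =
        (List.replicate (t + p - 1) (u ++ v)).flatten ++ u ∧
      Y.drop (Y.length - s) = (List.replicate p (u ++ v)).flatten ++ u := by
  set L := Y.length with hL
  obtain ⟨hs1, -, -, -, -⟩ := hall 1 le_rfl (by omega)
  have hs : 1 ≤ s := by simpa using hs1
  obtain ⟨-, hNL, -, hpalY, -⟩ := hall t (by omega) le_rfl
  obtain ⟨-, -, -, hpalY', -⟩ := hall (t - 1) (by omega) (by omega)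
  set N := s + (t - 1) * d with hN
  have hdN : d ≤ N := by
    have : (t - 1) * d = (t - 2) * d + d := by
      rw [show t - 1 = (t - 2) + 1 from by omega]; ring
    omega
  set W := Y.drop (L - N) with hWdef
  have hWlen : W.length = N := by
    rw [hWdef, List.length_drop]; omega
  have hpal : W.reverse = W := by
    rw [List.take_length] at hpalY
    exact hpalY
  have hNd : s + (t - 1 - 1) * d = N - d := by
    rw [hN, show t - 1 = (t - 2) + 1 from by omega]
    have : (t - 2 + 1) * d = (t - 2) * d + d := by ring
    simp only [Nat.add_sub_cancel]
    omega
  have hpal' : (W.drop d).reverse = W.drop d := by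
    rw [List.take_length, hNd] at hpalY'
    have : W.drop d = Y.drop (L - (N - d)) := by
      rw [hWdef, List.drop_drop]
      congr 1
      omega
    rw [this]
    exact hpalY'
  -- periodicity
  have hper : W.drop d = W.take (W.length - d) := by
    have h3 : W.drop d = (W.take (W.length - d)).reverse := by
      have := pal_drop hpal (W.length - d)
      rwa [show W.length - (W.length - d) = d by omega] at this
    rw [← hpal', h3, List.reverse_reverse]
  set p := s / d with hp
  set r := s % d with hr'
  have hsdr : d * p + r = s := Nat.div_add_mod s d
  have hpd : p * d = d * p := by ring
  have hr : r < d := Nat.mod_lt _ (by omega)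
  set k := t - 1 + p with hk'
  have hk : W.length = k * d + r := by
    rw [hWlen, hN]
    have h1 : k * d = (t - 1) * d + p * d := by rw [hk']; ring
    omega
  have hdecomp := periodic_decomp d k r W hr hk hper
  clear_value p r k
  set B := W.take d with hBdef
  set u := W.take r with hudef
  set v := B.drop r with hvdef
  have hlenB : B.length = d := by
    rw [hBdef, List.length_take]; omega
  have hlenu : u.length = r := by
    rw [hudef, List.length_take]; omega
  have hBuv : u ++ v = B := by
    have h1 : B.take r = u := by
      rw [hBdef, List.take_take, hudef]
      congr 1
      omega
    rw [← h1, hvdef, List.take_append_drop]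
  have hkpos : 1 ≤ k := by omega
  -- u is a palindrome
  have hWku : W.drop (k * d) = u := by
    calc W.drop (k * d)
        = ((List.replicate (k + 0) B).flatten ++ u).drop (k * d) := by
          rw [Nat.add_zero, ← hdecomp]
      _ = (List.replicate 0 B).flatten ++ u := drop_flatten_rep B u d hlenB k 0
      _ = u := by simp
  have hu : u.reverse = u := by
    have h := pal_drop hpal r
    rw [show W.length - r = k * d from by omega, hWku] at h
    exact h.symm
  -- v is a palindrome
  have hWv : W.drop (W.length - d) = v ++ u := by
    have hkd : k * d = (k - 1) * d + d := mul_pred d hkpos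
    have hrepk : List.replicate k B = List.replicate ((k - 1) + 1) B := by
      congr 1; omega
    have h2 : W.drop ((k - 1) * d) = B ++ u := by
      calc W.drop ((k - 1) * d)
          = ((List.replicate ((k - 1) + 1) B).flatten ++ u).drop ((k - 1) * d) := by
            rw [← hrepk, ← hdecomp]
        _ = (List.replicate 1 B).flatten ++ u := drop_flatten_rep B u d hlenB (k - 1) 1
        _ = B ++ u := by simp
    rw [show W.length - d = (k - 1) * d + r from by omega, ← List.drop_drop, h2,
      ← hBuv, List.append_assoc, ← hlenu, List.drop_left]
  have hv : v.reverse = v := by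
    have h := pal_drop hpal d
    rw [hWv, ← hBdef, ← hBuv, List.reverse_append, hu] at h
    exact (List.append_cancel_right h).symm
  refine ⟨u, v, p, hu, hv, by rw [hBuv]; exact hlenB, ?_, ?_⟩
  · rw [hBuv, show t + p - 1 = k from by omega]
    exact hdecomp
  · have h1 : Y.drop (L - s) = W.drop (N - s) := by
      rw [hWdef, List.drop_drop]
      congr 1
      omega
    rw [h1]
    conv_lhs => rw [hdecomp]
    rw [hBuv, show N - s = (t - 1) * d from by omega,
      show k = (t - 1) + p from hk']
    exact drop_flatten_rep B u d hlenB (t - 1) p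
end

section
/- Let T be a string and i a position. If P₁ and P₂ are maximal palindromes of T ending at position i with |P₁| < |P₂| ≤ 2|P₁|, then |P₂| − |P₁| is a period of P₂. -/
lemma pal_get? {α : Type*} {L : List α} (h : L.reverse = L) {k : ℕ}
    (hk : k < L.length) : L[k]? = L[L.length - 1 - k]? := by
  conv_lhs => rw [← h]
  exact List.getElem?_reverse hk

/-- If `P₁, P₂` are maximal palindromes of `T` ending at position `i` with
`|P₁| < |P₂| ≤ 2|P₁|`, then `|P₂| - |P₁|` is a period of `P₂`. -/
theorem maxpal_close_lengths_period {α : Type*} (T : List α) (i s₁ s₂ : ℕ)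
    (h1 : MaxPalEnd T i s₁) (h2 : MaxPalEnd T i s₂)
    (hlt : s₁ < s₂) (hle : s₂ ≤ 2 * s₁) :
    HasPeriod ((T.take i).drop (i - s₂)) (s₂ - s₁) := by
  obtain ⟨hs1, hs1i, hiT, hpal1, -⟩ := h1
  obtain ⟨hs2, hs2i, -, hpal2, -⟩ := h2
  set S := (T.take i).drop (i - s₂) with hSdef
  set p := s₂ - s₁ with hp
  have hlen : S.length = s₂ := by
    simp [hSdef, List.length_drop, List.length_take]
    omega
  have hdrop : S.drop p = (T.take i).drop (i - s₁) := by
    rw [hSdef, List.drop_drop]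
    congr 1
    omega
  have hlen1 : (S.drop p).length = s₁ := by
    simp [List.length_drop, hlen]; omega
  have hpalP : (S.drop p).reverse = S.drop p := by rw [hdrop]; exact hpal1
  intro m hm
  rw [hlen] at hm
  have hm1 : m < s₁ := by omega
  have e1 : S[m]? = S[s₂ - 1 - m]? := by
    have := pal_get? hpal2 (k := m) (by rw [hlen]; omega)
    rwa [hlen] at this
  have e2 : (S.drop p)[s₁ - 1 - m]? = (S.drop p)[m]? := by
    have := pal_get? hpalP (k := s₁ - 1 - m) (by rw [hlen1]; omega)
    rw [hlen1] at this
    rw [this]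
    congr 1
    omega
  have gd : ∀ j, (S.drop p)[j]? = S[p + j]? := fun j => List.getElem?_drop
  rw [gd, gd] at e2
  have h3 : p + (s₁ - 1 - m) = s₂ - 1 - m := by omega
  have h4 : p + m = m + p := by omega
  rw [h3, h4] at e2
  rw [e1, ← e2]
end

section
/- Let u, v be strings such that uvu and (uv)²u are palindromes, and let w be a nonempty proper prefix of u such that (uv)²w is a suffix of (uv)²u. Then (uv)²w is a palindrome and |(uv)²w| > |uvu|. -/
/-- If `uvu` and `(uv)²u` are palindromes and `w` is a nonempty proper prefix of `u`
such that `(uv)²w` is a suffix of `(uv)²u`, then `(uv)²w` is a palindrome and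
`|(uv)²w| > |uvu|`. -/
theorem uvuvw_palindrome_longer {α : Type*} (u v w : List α)
    (hpal1 : (u ++ v ++ u).reverse = u ++ v ++ u)
    (hpal2 : (u ++ v ++ u ++ v ++ u).reverse = u ++ v ++ u ++ v ++ u)
    (hw_ne : w ≠ []) (hw_pre : w <+: u) (hw_lt : w.length < u.length)
    (hsuf : (u ++ v ++ u ++ v ++ w) <:+ (u ++ v ++ u ++ v ++ u)) :
    (u ++ v ++ u ++ v ++ w).reverse = u ++ v ++ u ++ v ++ w ∧
    (u ++ v ++ u).length < (u ++ v ++ u ++ v ++ w).length := by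
  have hpre : (u ++ v ++ u ++ v ++ w) <+: (u ++ v ++ u ++ v ++ u) := by
    obtain ⟨t, ht⟩ := hw_pre
    exact ⟨t, by simp [← ht, List.append_assoc]⟩
  have hrevpre : (u ++ v ++ u ++ v ++ w).reverse <+: (u ++ v ++ u ++ v ++ u) := by
    rw [← hpal2]
    exact hsuf.reverse
  have hlen : (u ++ v ++ u ++ v ++ w).reverse.length = (u ++ v ++ u ++ v ++ w).length := by
    simp; omega
  have heq : (u ++ v ++ u ++ v ++ w).reverse = u ++ v ++ u ++ v ++ w := by
    rcases List.prefix_or_prefix_of_prefix hrevpre hpre with h | h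
    · exact h.eq_of_length hlen
    · exact (h.eq_of_length hlen.symm).symm
  refine ⟨heq, ?_⟩
  have : 0 < w.length := List.length_pos_iff.mpr hw_ne
  simp only [List.length_append]
  omega
end
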